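/- Let m ≥ 1 be an integer, let p be a prime, write k = ⌊p/(m+1)⌋ and l = p mod (m+1), and let j be an integer with 0 ≤ j ≤ k. Define ζ ∈ 𝔽_p[x,y] by ζ = ξ_{m+1}^p − Σ_{i=j+1}^{k} C(k,i)·(−1)^i·ξ_{m+1}^{k−i}·(x·(1 − y)·ξ_m)^i·(1 − x·y)^l·ξ_m^p, where ξ_m, ξ_{m+1} are viewed in 𝔽_p[x,y] via the coefficient ring map ℤ → 𝔽_p. Then ζ lies in the p·(m+1)-th power of the ideal of 𝔽_p[x,y] generated by (x − 1) and (y − 1), and the constant coefficient of ζ (the coefficient of the monomial x^0·y^0) equals 1; in particular it is nonzero. -/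

import Mathlib

open MvPolynomial Finset

/-- The polynomial `ξ_m ∈ ℤ[x,y]`, where `X 0` plays the role of `x` and `X 1` of `y`:
`ξ_m = (−1)^m x^m y^(m+1) + Σ_{j=0}^{m−1} Σ_{i=j}^{m−1} (−1)^j C(m+1,j) x^i y^j`. -/
noncomputable def xi (m : ℕ) : MvPolynomial (Fin 2) ℤ :=
  (-1) ^ m * X 0 ^ m * X 1 ^ (m + 1) +
    ∑ j ∈ Finset.range m, ∑ i ∈ Finset.Icc j (m - 1),
      (-1) ^ j * ((m + 1).choose j : MvPolynomial (Fin 2) ℤ) * X 0 ^ i * X 1 ^ j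

lemma geo (n : ℕ) : (1 - X 0 : MvPolynomial (Fin 2) ℤ) * ∑ i ∈ range n, X 0 ^ i
    = 1 - X 0 ^ n := by
  have h := geom_sum_mul (X 0 : MvPolynomial (Fin 2) ℤ) n
  linear_combination -h

lemma geo2 {j m : ℕ} (h : j < m) :
    (1 - X 0 : MvPolynomial (Fin 2) ℤ) * ∑ i ∈ Icc j (m - 1), X 0 ^ i
    = X 0 ^ j - X 0 ^ m := by
  rw [show Icc j (m-1) = Ico j m by rw [← Finset.Ico_add_one_right_eq_Icc]; congr 1; omega]
  rw [Finset.sum_Ico_eq_sub _ h.le, mul_sub, geo, geo]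
  ring

lemma xiC (m : ℕ) : (1 - X 0) * xi m
    = (1 - X 0 * X 1) ^ (m + 1) - X 0 ^ m * (1 - X 1) ^ (m + 1) := by
  have hL : (1 - X 0) * xi m
      = (1 - X 0) * ((-1) ^ m * X 0 ^ m * X 1 ^ (m + 1)) +
        ∑ j ∈ range m, ((-1) ^ j * ((m + 1).choose j : MvPolynomial (Fin 2) ℤ) * X 1 ^ j)
          * ((1 - X 0) * ∑ i ∈ Icc j (m - 1), X 0 ^ i) := by
    rw [xi, mul_add, Finset.mul_sum]
    congr 1
    refine sum_congr rfl fun j hj => ?_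
    simp only [Finset.mul_sum]
    exact sum_congr rfl fun i _ => by ring
  rw [hL]
  have hL2 : ∀ j ∈ range m, ((-1) ^ j * ((m + 1).choose j : MvPolynomial (Fin 2) ℤ) * X 1 ^ j)
      * ((1 - X 0) * ∑ i ∈ Icc j (m - 1), X 0 ^ i)
      = ((-1) ^ j * ((m + 1).choose j : MvPolynomial (Fin 2) ℤ)) * (X 0 ^ j - X 0 ^ m) * X 1 ^ j := by
    intro j hj
    rw [geo2 (mem_range.mp hj)]; ring
  rw [sum_congr rfl hL2]
  have hR1 : (1 - X 0 * X 1 : MvPolynomial (Fin 2) ℤ) ^ (m + 1)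
      = ∑ i ∈ range (m + 2), (-(X 0 * X 1)) ^ i * 1 ^ (m + 1 - i) * ((m+1).choose i : MvPolynomial (Fin 2) ℤ) := by
    rw [show (1 - X 0 * X 1 : MvPolynomial (Fin 2) ℤ) = -(X 0 * X 1) + 1 by ring, add_pow]
  have hR2 : (1 - X 1 : MvPolynomial (Fin 2) ℤ) ^ (m + 1)
      = ∑ i ∈ range (m + 2), (-(X 1)) ^ i * 1 ^ (m + 1 - i) * ((m+1).choose i : MvPolynomial (Fin 2) ℤ) := by
    rw [show (1 - X 1 : MvPolynomial (Fin 2) ℤ) = -(X 1) + 1 by ring, add_pow]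
  rw [hR1, hR2, Finset.mul_sum, ← Finset.sum_sub_distrib]
  have hR3 : ∀ i ∈ range (m + 2),
      (-(X 0 * X 1)) ^ i * 1 ^ (m + 1 - i) * ((m+1).choose i : MvPolynomial (Fin 2) ℤ)
        - X 0 ^ m * ((-(X 1)) ^ i * 1 ^ (m + 1 - i) * ((m+1).choose i : MvPolynomial (Fin 2) ℤ))
      = ((-1) ^ i * ((m + 1).choose i : MvPolynomial (Fin 2) ℤ)) * (X 0 ^ i - X 0 ^ m) * X 1 ^ i := by
    intro i _
    rw [neg_pow (X 0 * X 1 : MvPolynomial (Fin 2) ℤ), neg_pow (X 1 : MvPolynomial (Fin 2) ℤ)]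
    ring
  rw [sum_congr rfl hR3, sum_range_succ, sum_range_succ]
  rw [Nat.choose_self, Nat.cast_one]
  ring


lemma one_sub_X0_ne : (1 - X 0 : MvPolynomial (Fin 2) ℤ) ≠ 0 := by
  intro h
  have h2 := congrArg constantCoeff h
  simp at h2

lemma xiA2 (m : ℕ) : xi (m + 1) = (1 - X 0 * X 1) * xi m + X 0 ^ m * (1 - X 1) ^ (m + 1) := by
  apply mul_left_cancel₀ one_sub_X0_ne
  have h1 := xiC (m + 1)
  have h2 := xiC m
  linear_combination h1 - (1 - X 0 * X 1) * h2

lemma xiA1 (m : ℕ) : xi (m + 1) = X 0 * (1 - X 1) * xi m + (1 - X 0 * X 1) ^ (m + 1) := by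
  have h1 := xiA2 m
  have h2 := xiC m
  linear_combination h1 + h2

lemma xi_mem (n : ℕ) :
    xi n ∈ (Ideal.span {X 0 - 1, X 1 - 1} : Ideal (MvPolynomial (Fin 2) ℤ)) ^ n := by
  induction n with
  | zero => simp
  | succ n ih =>
    set I : Ideal (MvPolynomial (Fin 2) ℤ) := Ideal.span {X 0 - 1, X 1 - 1} with hI
    have hxy : (1 - X 0 * X 1 : MvPolynomial (Fin 2) ℤ) ∈ I := by
      rw [hI, Ideal.mem_span_pair]
      exact ⟨-1, -X 0, by ring⟩
    have hy : (1 - X 1 : MvPolynomial (Fin 2) ℤ) ∈ I := by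
      rw [hI, Ideal.mem_span_pair]
      exact ⟨0, -1, by ring⟩
    rw [xiA2, pow_succ]
    refine Ideal.add_mem _ ?_ ?_
    · rw [mul_comm (1 - X 0 * X 1)]
      exact Ideal.mul_mem_mul ih hxy
    · rw [show I ^ n * I = I ^ (n+1) from (pow_succ I n).symm]
      exact Ideal.mul_mem_left _ _ (Ideal.pow_mem_pow hy (n + 1))

lemma xi_cc (n : ℕ) : constantCoeff (xi (n + 1)) = 1 := by
  rw [xi]
  simp only [map_add, map_mul, map_pow, map_sum, constantCoeff_X, map_neg, map_one,
    map_natCast]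
  rw [sum_range_succ']
  have h1 : ∀ jj ∈ range n, (∑ i ∈ Icc (jj+1) (n + 1 - 1),
      (-1:ℤ) ^ (jj+1) * ((n + 1 + 1).choose (jj+1) : ℤ) * 0 ^ i * 0 ^ (jj+1)) = 0 := by
    intro jj _
    apply Finset.sum_eq_zero
    intro i _
    rw [pow_succ (0:ℤ) jj]
    ring
  rw [Finset.sum_congr rfl h1, Finset.sum_const_zero, zero_add]
  rw [show Icc 0 (n + 1 - 1) = range (n + 1) by
    rw [Finset.range_eq_Ico, Finset.Ico_add_one_right_eq_Icc]; rfl]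
  rw [sum_range_succ']
  simp

lemma mem_pow_mul {R : Type*} [CommRing R] {I : Ideal R} {a b : R} {s t : ℕ}
    (ha : a ∈ I ^ s) (hb : b ∈ I ^ t) : a * b ∈ I ^ (s + t) := by
  rw [pow_add]; exact Ideal.mul_mem_mul ha hb

lemma main_aux (m : ℕ) (hm : 1 ≤ m) (p : ℕ) (hp : p.Prime)
    (j : ℕ) (hj : j ≤ p / (m + 1)) :
    (MvPolynomial.map (Int.castRingHom (ZMod p)) (xi (m + 1)) ^ p -
        ∑ i ∈ Finset.Icc (j + 1) (p / (m + 1)),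
          ((p / (m + 1)).choose i : MvPolynomial (Fin 2) (ZMod p)) * (-1) ^ i *
              MvPolynomial.map (Int.castRingHom (ZMod p)) (xi (m + 1)) ^ (p / (m + 1) - i) *
            (X 0 * (1 - X 1) * MvPolynomial.map (Int.castRingHom (ZMod p)) (xi m)) ^ i *
            (1 - X 0 * X 1) ^ (p % (m + 1)) *
            MvPolynomial.map (Int.castRingHom (ZMod p)) (xi m) ^ p)
      ∈ (Ideal.span {X 0 - 1, X 1 - 1} : Ideal (MvPolynomial (Fin 2) (ZMod p))) ^ (p * (m + 1)) ∧
    MvPolynomial.coeff 0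
      (MvPolynomial.map (Int.castRingHom (ZMod p)) (xi (m + 1)) ^ p -
        ∑ i ∈ Finset.Icc (j + 1) (p / (m + 1)),
          ((p / (m + 1)).choose i : MvPolynomial (Fin 2) (ZMod p)) * (-1) ^ i *
              MvPolynomial.map (Int.castRingHom (ZMod p)) (xi (m + 1)) ^ (p / (m + 1) - i) *
            (X 0 * (1 - X 1) * MvPolynomial.map (Int.castRingHom (ZMod p)) (xi m)) ^ i *
            (1 - X 0 * X 1) ^ (p % (m + 1)) *
            MvPolynomial.map (Int.castRingHom (ZMod p)) (xi m) ^ p) = 1 := by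
  haveI : Fact p.Prime := ⟨hp⟩
  set f := Int.castRingHom (ZMod p) with hf
  set k := p / (m + 1) with hk
  set l := p % (m + 1) with hl
  set A := MvPolynomial.map f (xi (m + 1)) with hA
  set B := MvPolynomial.map f (xi m) with hB
  set I : Ideal (MvPolynomial (Fin 2) (ZMod p)) := Ideal.span {X 0 - 1, X 1 - 1} with hIdef
  -- basic ideal members
  have hy : (1 - X 1 : MvPolynomial (Fin 2) (ZMod p)) ∈ I := by
    rw [hIdef, Ideal.mem_span_pair]; exact ⟨0, -1, by ring⟩
  have hxy : (1 - X 0 * X 1 : MvPolynomial (Fin 2) (ZMod p)) ∈ I := by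
    rw [hIdef, Ideal.mem_span_pair]; exact ⟨-1, -X 0, by ring⟩
  have hspan : Ideal.map (MvPolynomial.map f)
      (Ideal.span {X 0 - 1, X 1 - 1} : Ideal (MvPolynomial (Fin 2) ℤ)) = I := by
    rw [Ideal.map_span, hIdef]
    congr 1
    rw [Set.image_insert_eq, Set.image_singleton]
    simp [map_sub]
  have hXi : ∀ n, MvPolynomial.map f (xi n) ∈ I ^ n := by
    intro n
    rw [← hspan, ← Ideal.map_pow]
    exact Ideal.mem_map_of_mem _ (xi_mem n)
  have hXiA : A ∈ I ^ (m + 1) := hXi (m + 1)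
  have hXiB : B ∈ I ^ m := hXi m
  -- mapped identities
  have hI1 : A = X 0 * (1 - X 1) * B + (1 - X 0 * X 1) ^ (m + 1) := by
    have h := congrArg (MvPolynomial.map f) (xiA1 m)
    rw [hA, hB]
    simpa only [map_add, map_mul, map_pow, map_sub, map_one, MvPolynomial.map_X] using h
  have hI2 : A = (1 - X 0 * X 1) * B + X 0 ^ m * (1 - X 1) ^ (m + 1) := by
    have h := congrArg (MvPolynomial.map f) (xiA2 m)
    rw [hA, hB]
    simpa only [map_add, map_mul, map_pow, map_sub, map_one, MvPolynomial.map_X] using h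
  have hkl : (m + 1) * k + l = p := Nat.div_add_mod p (m + 1)
  -- the full binomial sum
  have hsum : ∑ i ∈ range (k + 1),
      (k.choose i : MvPolynomial (Fin 2) (ZMod p)) * (-1) ^ i * A ^ (k - i) *
        (X 0 * (1 - X 1) * B) ^ i * (1 - X 0 * X 1) ^ l * B ^ p
      = ((1 - X 0 * X 1) * B) ^ p := by
    have e1 : ∀ i ∈ range (k + 1),
        (k.choose i : MvPolynomial (Fin 2) (ZMod p)) * (-1) ^ i * A ^ (k - i) *
          (X 0 * (1 - X 1) * B) ^ i * (1 - X 0 * X 1) ^ l * B ^ p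
        = ((-(X 0 * (1 - X 1) * B)) ^ i * A ^ (k - i)
            * (k.choose i : MvPolynomial (Fin 2) (ZMod p)))
          * ((1 - X 0 * X 1) ^ l * B ^ p) := by
      intro i _
      generalize X 0 * (1 - X 1) * B = Y
      generalize (1 - X 0 * X 1 : MvPolynomial (Fin 2) (ZMod p)) = E
      rw [neg_pow]
      ring
    rw [sum_congr rfl e1, ← Finset.sum_mul, ← add_pow]
    rw [show -(X 0 * (1 - X 1) * B) + A = (1 - X 0 * X 1) ^ (m + 1) by
      linear_combination hI1]
    rw [← pow_mul, mul_pow, ← mul_assoc, ← pow_add, hkl]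
  -- splitting off the first j+1 terms
  have h0 : ∑ i ∈ Icc (j + 1) k,
      (k.choose i : MvPolynomial (Fin 2) (ZMod p)) * (-1) ^ i * A ^ (k - i) *
        (X 0 * (1 - X 1) * B) ^ i * (1 - X 0 * X 1) ^ l * B ^ p
      = ((1 - X 0 * X 1) * B) ^ p - ∑ i ∈ range (j + 1),
      (k.choose i : MvPolynomial (Fin 2) (ZMod p)) * (-1) ^ i * A ^ (k - i) *
        (X 0 * (1 - X 1) * B) ^ i * (1 - X 0 * X 1) ^ l * B ^ p := by
    rw [← hsum, ← Finset.Ico_add_one_right_eq_Icc, Finset.sum_Ico_eq_sub _ (by omega : j + 1 ≤ k + 1)]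
  have hzeta : A ^ p - (∑ i ∈ Icc (j + 1) k,
      (k.choose i : MvPolynomial (Fin 2) (ZMod p)) * (-1) ^ i * A ^ (k - i) *
        (X 0 * (1 - X 1) * B) ^ i * (1 - X 0 * X 1) ^ l * B ^ p)
      = (X 0 ^ m * (1 - X 1) ^ (m + 1)) ^ p + ∑ i ∈ range (j + 1),
      (k.choose i : MvPolynomial (Fin 2) (ZMod p)) * (-1) ^ i * A ^ (k - i) *
        (X 0 * (1 - X 1) * B) ^ i * (1 - X 0 * X 1) ^ l * B ^ p := by
    rw [h0]
    rw [show A ^ p - (((1 - X 0 * X 1) * B) ^ p - ∑ i ∈ range (j + 1),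
        (k.choose i : MvPolynomial (Fin 2) (ZMod p)) * (-1) ^ i * A ^ (k - i) *
          (X 0 * (1 - X 1) * B) ^ i * (1 - X 0 * X 1) ^ l * B ^ p)
      = (A ^ p - ((1 - X 0 * X 1) * B) ^ p) + ∑ i ∈ range (j + 1),
        (k.choose i : MvPolynomial (Fin 2) (ZMod p)) * (-1) ^ i * A ^ (k - i) *
          (X 0 * (1 - X 1) * B) ^ i * (1 - X 0 * X 1) ^ l * B ^ p by ring]
    rw [← sub_pow_char, show A - (1 - X 0 * X 1) * B
        = X 0 ^ m * (1 - X 1) ^ (m + 1) by linear_combination hI2]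
  constructor
  · rw [hzeta]
    refine Ideal.add_mem _ ?_ (Ideal.sum_mem _ fun i hi => ?_)
    · rw [mul_pow]
      refine Ideal.mul_mem_left _ _ ?_
      rw [← pow_mul, show (m + 1) * p = p * (m + 1) from Nat.mul_comm _ _]
      exact Ideal.pow_mem_pow hy _
    · have hik : i ≤ k := by have := mem_range.mp hi; omega
      have hA2 : A ^ (k - i) ∈ I ^ ((m + 1) * (k - i)) := by
        rw [pow_mul]; exact Ideal.pow_mem_pow hXiA _
      have hB2 : (X 0 * (1 - X 1) * B) ^ i ∈ I ^ ((m + 1) * i) := by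
        have hb1 : X 0 * (1 - X 1) * B ∈ I ^ (m + 1) := by
          rw [show X 0 * (1 - X 1) * B = B * (X 0 * (1 - X 1)) by ring, pow_succ]
          exact Ideal.mul_mem_mul hXiB (Ideal.mul_mem_left _ _ hy)
        rw [pow_mul]; exact Ideal.pow_mem_pow hb1 i
      have hE : (1 - X 0 * X 1 : MvPolynomial (Fin 2) (ZMod p)) ^ l ∈ I ^ l :=
        Ideal.pow_mem_pow hxy l
      have hXm : B ^ p ∈ I ^ (m * p) := by
        rw [pow_mul]; exact Ideal.pow_mem_pow hXiB p
      have h1 := mem_pow_mul (mem_pow_mul (mem_pow_mul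
        (Ideal.mul_mem_left _ ((k.choose i : MvPolynomial (Fin 2) (ZMod p)) * (-1) ^ i) hA2)
        hB2) hE) hXm
      have he : (m + 1) * (k - i) + (m + 1) * i + l + m * p = p * (m + 1) := by
        have h2 : (m + 1) * (k - i) + (m + 1) * i = (m + 1) * k := by
          rw [← Nat.mul_add, Nat.sub_add_cancel hik]
        calc (m + 1) * (k - i) + (m + 1) * i + l + m * p
            = (m + 1) * k + l + m * p := by rw [h2]
          _ = p + m * p := by rw [hkl]
          _ = p * (m + 1) := by ring
      rw [he] at h1
      convert h1 using 1
  · rw [← MvPolynomial.constantCoeff_eq]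
    have hccA : constantCoeff A = 1 := by
      rw [hA, constantCoeff_map, xi_cc, map_one]
    have hterm : ∀ i ∈ Icc (j + 1) k, constantCoeff
        ((k.choose i : MvPolynomial (Fin 2) (ZMod p)) * (-1) ^ i * A ^ (k - i) *
          (X 0 * (1 - X 1) * B) ^ i * (1 - X 0 * X 1) ^ l * B ^ p) = 0 := by
      intro i hi
      have hi1 : i ≠ 0 := by have := (mem_Icc.mp hi).1; omega
      simp only [map_mul, map_pow, constantCoeff_X, zero_mul, zero_pow hi1, mul_zero]
    rw [map_sub, map_pow, hccA, one_pow, map_sum, Finset.sum_congr rfl hterm,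
      Finset.sum_const_zero, sub_zero]

theorem stmt_9 (m : ℕ) (hm : 1 ≤ m) (p : ℕ) (hp : p.Prime)
    (j : ℕ) (hj : j ≤ p / (m + 1)) :
    letI k := p / (m + 1)
    letI l := p % (m + 1)
    letI Ξ : ℕ → MvPolynomial (Fin 2) (ZMod p) :=
      fun n => MvPolynomial.map (Int.castRingHom (ZMod p)) (xi n)
    letI ζ : MvPolynomial (Fin 2) (ZMod p) :=
      Ξ (m + 1) ^ p -
        ∑ i ∈ Finset.Icc (j + 1) k,
          (k.choose i : MvPolynomial (Fin 2) (ZMod p)) * (-1) ^ i * Ξ (m + 1) ^ (k - i) *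
            (X 0 * (1 - X 1) * Ξ m) ^ i * (1 - X 0 * X 1) ^ l * Ξ m ^ p
    ζ ∈ (Ideal.span {X 0 - 1, X 1 - 1} : Ideal (MvPolynomial (Fin 2) (ZMod p))) ^ (p * (m + 1)) ∧
      MvPolynomial.coeff 0 ζ = 1 := by
  exact main_aux m hm p hp j hj
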